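/- Let G be a connected simple graph of order n ≥ 2. Then the conflict-free connection number of G equals n−1 if and only if G is the star K_{1,n−1}. -/

import Mathlib

open SimpleGraph

/-- An edge-coloring `c` with `k` colors makes `G` conflict-free connected if every two
distinct vertices are joined by a path on which some color appears on exactly one edge. -/
def SimpleGraph.IsCFCColoring {V : Type*} (G : SimpleGraph V) {k : ℕ}
    (c : Sym2 V → Fin k) : Prop :=
  ∀ u v : V, u ≠ v → ∃ p : G.Walk u v, p.IsPath ∧
    ∃ col : Fin k, (p.edges.map c).count col = 1

/-- The conflict-free connection number of `G`: the smallest number of colors in an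
edge-coloring of `G` that makes `G` conflict-free connected. -/
noncomputable def SimpleGraph.cfc {V : Type*} (G : SimpleGraph V) : ℕ :=
  sInf {k | ∃ c : Sym2 V → Fin k, G.IsCFCColoring c}

/-- `G` is a star: there is a center adjacent to all other vertices, and these are the
only adjacencies. -/
def SimpleGraph.IsStar {V : Type*} (G : SimpleGraph V) : Prop :=
  ∃ c : V, ∀ a b : V, G.Adj a b ↔ a ≠ b ∧ (a = c ∨ b = c)

namespace CFCAux
variable {V : Type*}

lemma adj_cf {G : SimpleGraph V} {k : ℕ} (c : Sym2 V → Fin k) {u v : V} (h : G.Adj u v) :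
    ∃ p : G.Walk u v, p.IsPath ∧ ∃ col : Fin k, (p.edges.map c).count col = 1 := by
  refine ⟨Walk.cons h Walk.nil, ?_, c s(u, v), ?_⟩
  · simp [Walk.isPath_def, h.ne]
  · simp

open Classical in
noncomputable def descend (G : SimpleGraph V) (r : V) (p : V → V)
    (hp : ∀ v, v ≠ r → G.Adj v (p v) ∧ G.dist r (p v) < G.dist r v) : (v : V) → G.Walk v r
  | v =>
    if h : v = r then (Walk.nil : G.Walk r r).copy h.symm rfl
    else Walk.cons (hp v h).1 (descend G r p hp (p v))
  termination_by v => G.dist r v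
  decreasing_by exact (hp v h).2

open Classical in
lemma descend_edges (G : SimpleGraph V) (r : V) (p : V → V)
    (hp : ∀ v, v ≠ r → G.Adj v (p v) ∧ G.dist r (p v) < G.dist r v) (v : V) :
    ∀ e ∈ (descend G r p hp v).edges, ∃ x, x ≠ r ∧ e = s(x, p x) := by
  generalize hn : G.dist r v = n
  induction n using Nat.strong_induction_on generalizing v with
  | _ n ih =>
    rw [descend]
    split_ifs with h
    · simp
    · intro e he
      rw [Walk.edges_cons, List.mem_cons] at he
      rcases he with rfl | he
      · exact ⟨v, h, rfl⟩
      · exact ih (G.dist r (p v)) (hn ▸ (hp v h).2) (p v) rfl e he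

lemma count_map_eq_one {α β : Type*} [DecidableEq α] [DecidableEq β] (f : α → β)
    (xs : List α) (hnd : xs.Nodup) (z : α) (hz : z ∈ xs)
    (h : ∀ x ∈ xs, f x = f z → x = z) : (xs.map f).count (f z) = 1 := by
  induction xs with
  | nil => simp at hz
  | cons a t ih =>
    rcases List.mem_cons.mp hz with rfl | hz'
    · simp only [List.map_cons, List.count_cons_self]
      have : (t.map f).count (f z) = 0 := by
        rw [List.count_eq_zero]
        intro hmem
        obtain ⟨x, hx, hfx⟩ := List.mem_map.mp hmem
        exact (List.nodup_cons.mp hnd).1 ((h x (List.mem_cons_of_mem _ hx) hfx) ▸ hx)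
      omega
    · have ha : a ≠ z := fun haz => (List.nodup_cons.mp hnd).1 (haz ▸ hz')
      have hfa : f a ≠ f z := fun hf => ha (h a List.mem_cons_self hf)
      simp only [List.map_cons]
      rw [List.count_cons_of_ne hfa]
      exact ih (List.nodup_cons.mp hnd).2 hz' fun x hx => h x (List.mem_cons_of_mem _ hx)

lemma exists_good_pair {G : SimpleGraph V} (hc : G.Connected) {r v2 : V} (p : V → V)
    (hp : ∀ v, v ≠ r → G.Adj v (p v) ∧ G.dist r (p v) < G.dist r v)
    (hd : 2 ≤ G.dist r v2)
    (hns : ¬ ∃ z : V, ∀ a b : V, G.Adj a b ↔ a ≠ b ∧ (a = z ∨ b = z)) :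
    ∃ x0 y0 : V, x0 ≠ r ∧ y0 ≠ r ∧ x0 ≠ y0 ∧ p x0 ≠ y0 ∧ p y0 ≠ x0 ∧
      (p x0 = p y0 → G.Adj x0 y0) := by
  by_contra H
  push_neg at H
  have H' : ∀ x y : V, x ≠ r → y ≠ r → x ≠ y →
      p x = y ∨ p y = x ∨ (p x = p y ∧ ¬ G.Adj x y) := by
    intro x y hx hy hxy
    by_cases h1 : p x = y
    · exact Or.inl h1
    by_cases h2 : p y = x
    · exact Or.inr (Or.inl h2)
    · exact Or.inr (Or.inr (H x y hx hy hxy h1 h2))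
  have dist0 : ∀ x : V, G.dist r x = 0 → x = r := by
    intro x hx
    obtain ⟨q, hq⟩ := (hc.preconnected r x).exists_walk_length_eq_dist
    exact (Walk.eq_of_length_eq_zero (hq.trans hx)).symm
  have hv2r : v2 ≠ r := by
    intro h; rw [h, dist_self] at hd; omega
  obtain ⟨hAdj, hdz⟩ := hp v2 hv2r
  set z := p v2 with hzdef
  have hzr : z ≠ r := by
    intro h
    have : G.dist r v2 = 1 := dist_eq_one_iff_adj.mpr (h ▸ hAdj).symm
    omega
  have hzv2 : z ≠ v2 := hAdj.ne'
  have key1 : ∀ x : V, x ≠ r → x ≠ v2 → x ≠ z → p x = z ∧ ¬ G.Adj v2 x := by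
    intro x hxr hxv2 hxz
    rcases H' v2 x hv2r hxr (Ne.symm hxv2) with h1 | h2 | h3
    · exact absurd h1.symm hxz
    · -- p x = v2
      exfalso
      have hdx : G.dist r v2 < G.dist r x := h2 ▸ (hp x hxr).2
      rcases H' z x hzr hxr (Ne.symm hxz) with g1 | g2 | g3
      · -- p z = x
        have : G.dist r x < G.dist r z := g1 ▸ (hp z hzr).2
        omega
      · exact hzv2 (g2.symm.trans h2)
      · -- p z = p x = v2
        have : G.dist r v2 < G.dist r z := (h2 ▸ g3.1) ▸ (hp z hzr).2
        omega
    · exact ⟨h3.1.symm, h3.2⟩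
  have key2 : p z = r := by
    by_contra hpz
    have h1 := hp z hzr
    have h2 : p z ≠ v2 := by
      intro h
      have : G.dist r v2 < G.dist r z := h ▸ h1.2
      omega
    have h3 : p z ≠ z := fun h => by rw [h] at h1; omega
    have h4 := (key1 (p z) hpz h2 h3).1
    have h5 := (hp (p z) hpz).2
    rw [h4] at h5
    omega
  have adjz : ∀ a : V, a ≠ z → G.Adj a z := by
    intro a ha
    rcases eq_or_ne a r with rfl | har
    · exact (key2 ▸ (hp z hzr).1).symm
    rcases eq_or_ne a v2 with rfl | hav2
    · exact hAdj
    · exact (key1 a har hav2 ha).1 ▸ (hp a har).1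
  have hr_noadj : ∀ x : V, x ≠ z → x ≠ r → ¬ G.Adj r x := by
    intro x hxz hxr hadj
    have h1 : G.dist r x = 1 := dist_eq_one_iff_adj.mpr hadj
    rcases eq_or_ne x v2 with rfl | hxv2
    · omega
    · have h2 : G.dist r z < G.dist r x := (key1 x hxr hxv2 hxz).1 ▸ (hp x hxr).2
      have h3 : G.dist r z = 0 := by omega
      exact hzr (dist0 z h3)
  have hv_noadj : ∀ x : V, x ≠ z → x ≠ v2 → ¬ G.Adj v2 x := by
    intro x hxz hxv2 hadj
    rcases eq_or_ne x r with heq | hxr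
    · rw [heq] at hadj
      have : G.dist r v2 = 1 := dist_eq_one_iff_adj.mpr hadj.symm
      omega
    · exact (key1 x hxr hxv2 hxz).2 hadj
  have noadj : ∀ a b : V, G.Adj a b → a ≠ z → b ≠ z → False := by
    intro a b hab haz hbz
    rcases eq_or_ne a r with rfl | har
    · exact hr_noadj b hbz hab.ne' hab
    rcases eq_or_ne b r with rfl | hbr
    · exact hr_noadj a haz hab.ne hab.symm
    rcases eq_or_ne a v2 with rfl | hav2
    · exact hv_noadj b hbz hab.ne' hab
    rcases eq_or_ne b v2 with rfl | hbv2
    · exact hv_noadj a haz hab.ne hab.symm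
    rcases H' a b har hbr hab.ne with h1 | h2 | h3
    · exact hbz (h1 ▸ (key1 a har hav2 haz).1)
    · exact haz (h2 ▸ (key1 b hbr hbv2 hbz).1)
    · exact h3.2 hab
  refine hns ⟨z, fun a b => ⟨fun hab => ⟨hab.ne, ?_⟩, fun ⟨hne, h⟩ => ?_⟩⟩
  · rcases eq_or_ne a z with rfl | haz
    · exact Or.inl rfl
    rcases eq_or_ne b z with rfl | hbz
    · exact Or.inr rfl
    · exact absurd (noadj a b hab haz hbz) not_false
  · rcases h with rfl | rfl
    · exact (adjz b (Ne.symm hne)).symm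
    · exact adjz a hne


open Classical in
lemma nonstar_coloring [Fintype V] {G : SimpleGraph V} (hc : G.Connected)
    (hns : ¬ ∃ z : V, ∀ a b : V, G.Adj a b ↔ a ≠ b ∧ (a = z ∨ b = z))
    (hn : 2 ≤ Fintype.card V) :
    ∃ c : Sym2 V → Fin (Fintype.card V - 2), G.IsCFCColoring c := by
  by_cases hcomp : ∀ u v : V, u ≠ v → G.Adj u v
  · -- complete graph; card ≥ 3, constant coloring works
    have h3 : 3 ≤ Fintype.card V := by
      by_contra h
      have h2 : (Finset.univ : Finset V).card = 2 := by rw [Finset.card_univ]; omega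
      obtain ⟨x, y, hxy, hset⟩ := Finset.card_eq_two.mp h2
      refine hns ⟨x, fun a b => ⟨fun hab => ⟨hab.ne, ?_⟩, fun ⟨hne, hor⟩ => ?_⟩⟩
      · have hb : b = x ∨ b = y := by
          have : b ∈ (Finset.univ : Finset V) := Finset.mem_univ b
          rw [hset] at this; simpa using this
        have ha : a = x ∨ a = y := by
          have : a ∈ (Finset.univ : Finset V) := Finset.mem_univ a
          rw [hset] at this; simpa using this
        rcases ha with rfl | rfl
        · exact Or.inl rfl
        rcases hb with rfl | rfl
        · exact Or.inr rfl
        · exact absurd rfl hab.ne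
      · exact hcomp a b hne
    have hpos : 0 < Fintype.card V - 2 := by omega
    exact ⟨fun _ => ⟨0, hpos⟩, fun u v huv => adj_cf _ (hcomp u v huv)⟩
  · push_neg at hcomp
    obtain ⟨r, v2, hrv2, hnadj⟩ := hcomp
    have dist0 : ∀ x : V, G.dist r x = 0 → x = r := by
      intro x hx
      obtain ⟨q, hq⟩ := (hc.preconnected r x).exists_walk_length_eq_dist
      exact (Walk.eq_of_length_eq_zero (hq.trans hx)).symm
    have hd : 2 ≤ G.dist r v2 := by
      rcases Nat.lt_or_ge (G.dist r v2) 2 with h | h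
      · interval_cases hdd : G.dist r v2
        · exact absurd (dist0 v2 hdd) (Ne.symm hrv2)
        · exact absurd (dist_eq_one_iff_adj.mp hdd) hnadj
      · exact h
    have hex : ∀ x : V, x ≠ r → ∃ w, G.Adj x w ∧ G.dist r w < G.dist r x := by
      intro x hx
      obtain ⟨q, hq⟩ := (hc.preconnected x r).exists_walk_length_eq_dist
      cases q with
      | nil => exact absurd rfl hx
      | @cons _ m _ ha qq =>
        refine ⟨m, ha, ?_⟩
        have h1 : G.dist r m ≤ qq.length := dist_comm (u := r) ▸ dist_le qq
        have h2 : qq.length + 1 = G.dist x r := by simpa using hq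
        have h3 : G.dist x r = G.dist r x := dist_comm
        have h4 : G.dist r x ≠ 0 := fun h0 => hx (by
          have := dist0 x h0; exact this)
        omega
    let p : V → V := fun x => if h : x = r then r else (hex x h).choose
    have hp : ∀ v, v ≠ r → G.Adj v (p v) ∧ G.dist r (p v) < G.dist r v := by
      intro v hv
      simp only [p, dif_neg hv]
      exact (hex v hv).choose_spec
    obtain ⟨x0, y0, hx0r, hy0r, hx0y0, hpx0, hpy0, hpadj⟩ :=
      exists_good_pair hc p hp hd hns
    have edge_inj : ∀ x y : V, x ≠ r → y ≠ r → s(x, p x) = s(y, p y) → x = y := by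
      intro x y hx hy h
      rcases Sym2.eq_iff.mp h with ⟨h1, _⟩ | ⟨h1, h2⟩
      · exact h1
      · exfalso
        have d1 := (hp x hx).2
        have d2 := (hp y hy).2
        rw [h2] at d1
        rw [← h1] at d2
        omega
    -- the almost-injective vertex coloring
    let t : Finset V := (Finset.univ.erase r).erase y0
    have hx0t : x0 ∈ t := by
      simp only [t, Finset.mem_erase]
      exact ⟨hx0y0, hx0r, Finset.mem_univ x0⟩
    have htcard : Fintype.card t = Fintype.card V - 2 := by
      rw [Fintype.card_coe]
      simp only [t]
      rw [Finset.card_erase_of_mem (by simp [Finset.mem_erase, hy0r]),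
        Finset.card_erase_of_mem (Finset.mem_univ r), Finset.card_univ]
      omega
    let β : {x // x ∈ t} ≃ Fin (Fintype.card V - 2) := Fintype.equivFinOfCardEq htcard
    let f : V → Fin (Fintype.card V - 2) := fun x => if h : x ∈ t then β ⟨x, h⟩ else β ⟨x0, hx0t⟩
    have hnott : ∀ a : V, a ≠ r → a ∉ t → a = y0 := by
      intro a ha hat
      by_contra h
      exact hat (by simp [t, Finset.mem_erase, h, ha])
    have hf_inj : ∀ a b : V, a ≠ r → b ≠ r → f a = f b →
        a = b ∨ (a = x0 ∧ b = y0) ∨ (a = y0 ∧ b = x0) := by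
      intro a b ha hb h
      by_cases hat : a ∈ t <;> by_cases hbt : b ∈ t
      · simp only [f, dif_pos hat, dif_pos hbt] at h
        exact Or.inl (congrArg Subtype.val (β.injective h))
      · simp only [f, dif_pos hat, dif_neg hbt] at h
        exact Or.inr (Or.inl ⟨congrArg Subtype.val (β.injective h), hnott b hb hbt⟩)
      · simp only [f, dif_neg hat, dif_pos hbt] at h
        exact Or.inr (Or.inr ⟨hnott a ha hat, (congrArg Subtype.val (β.injective h)).symm⟩)
      · exact Or.inl ((hnott a ha hat).trans (hnott b hb hbt).symm)
    -- the edge coloring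
    let c : Sym2 V → Fin (Fintype.card V - 2) :=
      fun e => if h : ∃ x, x ≠ r ∧ e = s(x, p x) then f h.choose else f x0
    let invp : Sym2 V → V := fun e => if h : ∃ x, x ≠ r ∧ e = s(x, p x) then h.choose else x0
    have hc_inv : ∀ e : Sym2 V, (∃ x, x ≠ r ∧ e = s(x, p x)) →
        c e = f (invp e) ∧ invp e ≠ r ∧ e = s(invp e, p (invp e)) := by
      intro e h
      refine ⟨by simp only [c, invp, dif_pos h], ?_, ?_⟩
      · simp only [invp, dif_pos h]
        exact h.choose_spec.1
      · simp only [invp, dif_pos h]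
        exact h.choose_spec.2
    refine ⟨c, fun u v huv => ?_⟩
    by_cases hadj : G.Adj u v
    · exact adj_cf c hadj
    obtain ⟨P, hP, hE⟩ : ∃ P : G.Walk u v, P.IsPath ∧
        ∀ e ∈ P.edges, ∃ x, x ≠ r ∧ e = s(x, p x) := by
      refine ⟨((descend G r p hp u).append (descend G r p hp v).reverse).bypass,
        Walk.bypass_isPath _, fun e he => ?_⟩
      have hmem := Walk.edges_bypass_subset _ he
      rw [Walk.edges_append, List.mem_append] at hmem
      rcases hmem with hmem | hmem
      · exact descend_edges G r p hp u e hmem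
      · rw [Walk.edges_reverse, List.mem_reverse] at hmem
        exact descend_edges G r p hp v e hmem
    refine ⟨P, hP, ?_⟩
    set xs : List V := P.edges.map invp with hxsdef
    have hxs_mem : ∀ x ∈ xs, x ≠ r ∧ s(x, p x) ∈ P.edges := by
      intro x hx
      obtain ⟨e, he, rfl⟩ := List.mem_map.mp hx
      obtain ⟨-, h1, h2⟩ := hc_inv e (hE e he)
      exact ⟨h1, h2 ▸ he⟩
    have hxs_nodup : xs.Nodup := by
      refine List.Nodup.map_on ?_ hP.edges_nodup
      intro e he e' he' h
      obtain ⟨-, -, h2⟩ := hc_inv e (hE e he)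
      obtain ⟨-, -, h2'⟩ := hc_inv e' (hE e' he')
      rw [h2, h2', h]
    have hmapc : P.edges.map c = xs.map f := by
      rw [hxsdef, List.map_map]
      exact List.map_congr_left fun e he => (hc_inv e (hE e he)).1
    have hxs_ne : xs ≠ [] := by
      have : P.edges ≠ [] := by
        cases P with
        | nil => exact absurd rfl huv
        | cons h q => simp
      simpa [hxsdef] using this
    rw [hmapc]
    by_cases hboth : x0 ∈ xs ∧ y0 ∈ xs
    · by_cases hex3 : ∃ w ∈ xs, w ≠ x0 ∧ w ≠ y0
      · obtain ⟨w, hw, hw1, hw2⟩ := hex3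
        refine ⟨f w, count_map_eq_one f xs hxs_nodup w hw ?_⟩
        intro x hx h
        rcases hf_inj x w (hxs_mem x hx).1 (hxs_mem w hw).1 h with h1 | ⟨h1, h2⟩ | ⟨h1, h2⟩
        · exact h1
        · exact absurd h2 hw2
        · exact absurd h2 hw1
      · -- xs = exactly {x0, y0}; derive a contradiction with ¬ G.Adj u v
        exfalso
        push_neg at hex3
        have hsub : ∀ w ∈ xs, w = x0 ∨ w = y0 := by
          intro w hw
          by_cases h1 : w = x0
          · exact Or.inl h1
          · exact Or.inr (hex3 w hw h1)
        have hlen : xs.length = 2 := by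
          have hcard : xs.toFinset = {x0, y0} := by
            ext w
            simp only [List.mem_toFinset, Finset.mem_insert, Finset.mem_singleton]
            constructor
            · exact hsub w
            · rintro (rfl | rfl)
              · exact hboth.1
              · exact hboth.2
          have := List.toFinset_card_of_nodup hxs_nodup
          rw [hcard, Finset.card_insert_of_notMem (by simpa using hx0y0),
            Finset.card_singleton] at this
          omega
        have hPlen : P.edges.length = 2 := by
          have : xs.length = P.edges.length := by simp [hxsdef]
          omega
        -- P is a 2-edge path u - m - v
        cases P with
        | nil => simp at hPlen
        | @cons _ m _ h1 q =>
          cases q with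
          | nil => simp at hPlen
          | @cons _ m2 _ h2 q2 =>
            cases q2 with
            | cons h3 q3 => simp at hPlen
            | nil =>
              -- edges are [s(u,m), s(m,v)] where m is the middle vertex
              have he1 : s(u, m) ∈ (Walk.cons h1 (Walk.cons h2 Walk.nil)).edges := by simp
              have he2 : s(m, v) ∈ (Walk.cons h1 (Walk.cons h2 Walk.nil)).edges := by simp
              obtain ⟨-, ha1r, ha1e⟩ := hc_inv _ (hE _ he1)
              obtain ⟨-, ha2r, ha2e⟩ := hc_inv _ (hE _ he2)
              set a1 := invp s(u, m) with ha1def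
              set a2 := invp s(m, v) with ha2def
              have hxseq : xs = [a1, a2] := by simp [hxsdef]; exact ⟨rfl, rfl⟩
              have hne12 : a1 ≠ a2 := by
                have := hxseq ▸ hxs_nodup
                simp [List.nodup_cons] at this
                exact this
              have hmem1 : a1 ∈ xs := by rw [hxseq]; simp
              have hmem2 : a2 ∈ xs := by rw [hxseq]; simp
              have hx0m : x0 = a1 ∨ x0 = a2 := by
                have := hboth.1
                rw [hxseq] at this
                simpa using this
              have hy0m : y0 = a1 ∨ y0 = a2 := by
                have := hboth.2
                rw [hxseq] at this
                simpa using this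
              have hassign : (a1 = x0 ∧ a2 = y0) ∨ (a1 = y0 ∧ a2 = x0) := by
                rcases hx0m with h | h <;> rcases hy0m with h' | h'
                · exact absurd (h.trans h'.symm) hx0y0
                · exact Or.inl ⟨h.symm, h'.symm⟩
                · exact Or.inr ⟨h'.symm, h.symm⟩
                · exact absurd (h.trans h'.symm) hx0y0
              have key : ∀ b1 b2 : V, p b1 ≠ b2 → p b2 ≠ b1 → (p b1 = p b2 → G.Adj b1 b2) →
                  s(u, m) = s(b1, p b1) → s(m, v) = s(b2, p b2) → b1 ≠ b2 → False := by
                intro b1 b2 c1 c2 c3 hh1 hh2 hb12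
                rcases Sym2.eq_iff.mp hh1 with ⟨e1, e2⟩ | ⟨e1, e2⟩ <;>
                  rcases Sym2.eq_iff.mp hh2 with ⟨g1, g2⟩ | ⟨g1, g2⟩
                · exact c1 (e2.symm.trans g1)
                · subst e1; subst g2
                  exact hadj (c3 (e2.symm.trans g1))
                · exact hb12 (e2.symm.trans g1)
                · exact c2 (g1.symm.trans e2)
              rcases hassign with ⟨hh1, hh2⟩ | ⟨hh1, hh2⟩
              · rw [hh1] at ha1e hne12
                rw [hh2] at ha2e
                exact key x0 y0 hpx0 hpy0 hpadj ha1e ha2e (hh2 ▸ hne12)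
              · rw [hh1] at ha1e hne12
                rw [hh2] at ha2e
                exact key y0 x0 hpy0 hpx0 (fun h => (hpadj h.symm).symm) ha1e ha2e (hh2 ▸ hne12)
    · -- at most one of x0, y0 occurs: any color on the path occurs once
      obtain ⟨w, hw⟩ := List.exists_mem_of_ne_nil xs hxs_ne
      refine ⟨f w, count_map_eq_one f xs hxs_nodup w hw ?_⟩
      intro x hx h
      rcases hf_inj x w (hxs_mem x hx).1 (hxs_mem w hw).1 h with h1 | ⟨h1, h2⟩ | ⟨h1, h2⟩
      · exact h1
      · exact absurd ⟨h1 ▸ hx, h2 ▸ hw⟩ hboth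
      · exact absurd ⟨h2 ▸ hw, h1 ▸ hx⟩ hboth

lemma star_path_eq {G : SimpleGraph V} {z : V}
    (hs : ∀ a b : V, G.Adj a b ↔ a ≠ b ∧ (a = z ∨ b = z))
    {x y : V} (hx : x ≠ z) (hy : y ≠ z) (hxy : x ≠ y) (P : G.Walk x y) (hP : P.IsPath) :
    P.edges = [s(x, z), s(z, y)] := by
  cases P with
  | nil => exact absurd rfl hxy
  | @cons _ m _ h q =>
    have hm : m = z := by
      rcases (hs x m).mp h with ⟨hne, h1 | h2⟩
      · exact absurd h1 hx
      · exact h2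
    subst hm
    cases q with
    | nil => exact absurd rfl hy
    | @cons _ m2 _ h2 q2 =>
      have hm2 : m2 ≠ m := h2.ne'
      cases q2 with
      | nil => simp
      | @cons _ m3 _ h3 q3 =>
        have hm3 : m3 = m := by
          rcases (hs m2 m3).mp h3 with ⟨hne, h1 | h1⟩
          · exact absurd h1 hm2
          · exact h1
        subst hm3
        exfalso
        have hnd := hP.support_nodup
        rw [Walk.support_cons, Walk.support_cons, Walk.support_cons] at hnd
        rcases List.nodup_cons.mp hnd with ⟨-, hnd2⟩
        rcases List.nodup_cons.mp hnd2 with ⟨hzn, -⟩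
        exact hzn (List.mem_cons_of_mem _ (Walk.start_mem_support q3))

open Classical in
lemma star_lower [Fintype V] {G : SimpleGraph V} {z : V}
    (hs : ∀ a b : V, G.Adj a b ↔ a ≠ b ∧ (a = z ∨ b = z))
    {k : ℕ} (c : Sym2 V → Fin k) (hcfc : G.IsCFCColoring c) :
    Fintype.card V - 1 ≤ k := by
  have hinj : Function.Injective (fun x : {x : V // x ≠ z} => c s(x.1, z)) := by
    rintro ⟨x, hx⟩ ⟨y, hy⟩ hxy
    simp only [Subtype.mk.injEq]
    by_contra hne
    obtain ⟨P, hP, col, hcol⟩ := hcfc x y hne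
    rw [star_path_eq hs hx hy hne P hP] at hcol
    simp only [List.map_cons, List.map_nil] at hcol
    have hxy' : c s(x, z) = c s(z, y) := by
      have h : s(z, y) = s(y, z) := Sym2.eq_swap
      rw [h]; exact hxy
    rw [hxy'] at hcol
    rcases eq_or_ne col (c s(z, y)) with rfl | hcc
    · simp at hcol
    · rw [List.count_cons_of_ne (Ne.symm hcc), List.count_cons_of_ne (Ne.symm hcc)] at hcol
      simp at hcol
  have h1 : Fintype.card {x : V // x ≠ z} ≤ k := by
    simpa using Fintype.card_le_of_injective _ hinj
  have h2 : Fintype.card {x : V // x ≠ z} = Fintype.card V - 1 := by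
    rw [Fintype.card_subtype_compl (p := fun x => x = z)]
    simp [Fintype.card_subtype_eq]
  omega

open Classical in
lemma star_upper [Fintype V] {G : SimpleGraph V} {z : V}
    (hs : ∀ a b : V, G.Adj a b ↔ a ≠ b ∧ (a = z ∨ b = z))
    (hn : 2 ≤ Fintype.card V) :
    ∃ c : Sym2 V → Fin (Fintype.card V - 1), G.IsCFCColoring c := by
  have hadjz : ∀ a : V, a ≠ z → G.Adj a z := fun a ha => (hs a z).mpr ⟨ha, Or.inr rfl⟩
  have hcard : Fintype.card {x : V // x ≠ z} = Fintype.card V - 1 := by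
    rw [Fintype.card_subtype_compl (p := fun x => x = z)]
    simp [Fintype.card_subtype_eq]
  obtain ⟨w, hw⟩ : ∃ w : V, w ≠ z :=
    Fintype.exists_ne_of_one_lt_card (by omega) z
  let β : {x : V // x ≠ z} ≃ Fin (Fintype.card V - 1) := Fintype.equivFinOfCardEq hcard
  let g : V → Fin (Fintype.card V - 1) := fun x => if h : x ≠ z then β ⟨x, h⟩ else β ⟨w, hw⟩
  have hg : ∀ a b : V, a ≠ z → b ≠ z → g a = g b → a = b := by
    intro a b ha hb hab
    simp only [g, dif_pos ha, dif_pos hb] at hab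
    exact congrArg Subtype.val (β.injective hab)
  let c : Sym2 V → Fin (Fintype.card V - 1) :=
    Sym2.lift ⟨fun a b => if a = z then g b else if b = z then g a else β ⟨w, hw⟩, by
      intro a b
      by_cases ha : a = z <;> by_cases hb : b = z <;> simp [ha, hb]⟩
  have hcz : ∀ a : V, a ≠ z → c s(a, z) = g a := by
    intro a ha
    simp [c, if_neg ha]
  refine ⟨c, fun u v huv => ?_⟩
  rcases eq_or_ne v z with rfl | hv
  · exact adj_cf c (hadjz u huv)
  rcases eq_or_ne u z with rfl | hu
  · exact adj_cf c ((hadjz v hv).symm)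
  · refine ⟨Walk.cons (hadjz u hu) (Walk.cons ((hadjz v hv).symm) Walk.nil), ?_, c s(u, z), ?_⟩
    · simp [Walk.isPath_def, hu, hv.symm, huv]
    · have h1 : c s(z, v) = g v := by rw [Sym2.eq_swap]; exact hcz v hv
      have h2 : c s(u, z) ≠ c s(z, v) := by
        rw [h1, hcz u hu]
        exact fun h => huv (hg u v hu hv h)
      simp only [Walk.edges_cons, Walk.edges_nil, List.map_cons, List.map_nil]
      have h3 : c s(z, v) ≠ c s(u, z) := fun h => h2 h.symm
      simp [List.count_cons, h3]
end CFCAux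

/-- A connected graph of order `n ≥ 2` has conflict-free connection number `n - 1` if
and only if it is the star `K_{1,n-1}`. -/
theorem stmt_9 {V : Type*} [Fintype V] (G : SimpleGraph V) (hc : G.Connected)
    (hn : 2 ≤ Fintype.card V) : G.cfc = Fintype.card V - 1 ↔ G.IsStar := by
  constructor
  · intro h
    by_contra hns
    obtain ⟨c, hcfc⟩ := CFCAux.nonstar_coloring hc hns hn
    have hle : G.cfc ≤ Fintype.card V - 2 :=
      Nat.sInf_le (⟨c, hcfc⟩ : ∃ c : Sym2 V → Fin (Fintype.card V - 2), G.IsCFCColoring c)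
    omega
  · rintro ⟨z, hz⟩
    obtain ⟨c, hcfc⟩ := CFCAux.star_upper hz hn
    have hmem : (Fintype.card V - 1) ∈ {k | ∃ c : Sym2 V → Fin k, G.IsCFCColoring c} :=
      ⟨c, hcfc⟩
    have h1 : G.cfc ≤ Fintype.card V - 1 := Nat.sInf_le hmem
    have h2 : Fintype.card V - 1 ≤ G.cfc := by
      obtain ⟨c', hcfc'⟩ := Nat.sInf_mem (⟨_, hmem⟩ : Set.Nonempty _)
      exact CFCAux.star_lower hz c' hcfc'
    omega
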